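/- Let 0 ≤ m < n. Then det[ (1−t) / ((1−x_i y_j)(1−t x_i y_j)) ]_{1≤i,j≤n} = ∏_{m+1≤i<j≤n} (x_i − x_j) · det[ 𝒜_{i,j} ]_{1≤i,j≤n}, where 𝒜_{i,j} = (1−t)/((1−x_i y_j)(1−t x_i y_j)) for 1 ≤ i ≤ m, and 𝒜_{i,j} = Σ_{k=0}^{∞} (1−t^{k+1}) h_{k+i−n}(x_i, x_{i+1},…,x_n) y_j^k for m+1 ≤ i ≤ n, as an identity of formal power series in x_1,…,x_n, y_1,…,y_n over the field of rational functions in t. -/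

import Mathlib

noncomputable section

open scoped BigOperators

/-- The complete homogeneous symmetric polynomial `h_k(z₁,…,z_r)`, as a sum of all
monomials of total degree `k`. -/
def hsym {R : Type*} [CommSemiring R] (r k : ℕ) (z : Fin r → R) : R :=
  ∑ d ∈ Finset.Nat.antidiagonalTuple r k, ∏ i : Fin r, z i ^ d i

lemma hsym_zero {R : Type*} [CommSemiring R] (r : ℕ) (z : Fin r → R) : hsym r 0 z = 1 := by
  simp [hsym, Finset.Nat.antidiagonalTuple_zero_right]

lemma hsym_zero_vars {R : Type*} [CommSemiring R] (k : ℕ) (z : Fin 0 → R) :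
    hsym 0 (k + 1) z = 0 := by
  simp [hsym, Finset.Nat.antidiagonalTuple_zero_succ]

lemma hsym_congr {R : Type*} [CommSemiring R] {r r' k : ℕ} (h : r' = r) (z : Fin r → R)
    (z' : Fin r' → R) (hz : ∀ a : Fin r', z' a = z (Fin.cast h a)) :
    hsym r k z = hsym r' k z' := by
  subst h
  congr 1
  funext a
  rw [hz a]
  rfl

lemma hsym_cons {R : Type*} [CommSemiring R] (r k : ℕ) (z : R) (w : Fin r → R) :
    hsym (r + 1) k (Fin.cons z w) = ∑ p ∈ Finset.HasAntidiagonal.antidiagonal k, z ^ p.1 * hsym r p.2 w := by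
  unfold hsym
  simp_rw [Finset.mul_sum]
  rw [Finset.sum_sigma']
  refine Finset.sum_nbij' (fun d => ⟨(d 0, k - d 0), fun i => d i.succ⟩)
    (fun q => Fin.cons q.1.1 q.2) ?_ ?_ ?_ ?_ ?_
  · intro d hd
    rw [Finset.Nat.mem_antidiagonalTuple, Fin.sum_univ_succ] at hd
    refine Finset.mem_sigma.2 ⟨Finset.HasAntidiagonal.mem_antidiagonal.2 ?_, ?_⟩
    · show d 0 + (k - d 0) = k
      omega
    · show (fun i => d i.succ) ∈ Finset.Nat.antidiagonalTuple r (k - d 0)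
      rw [Finset.Nat.mem_antidiagonalTuple]
      omega
  · intro q hq
    rw [Finset.mem_sigma] at hq
    obtain ⟨h1, h2⟩ := hq
    rw [Finset.HasAntidiagonal.mem_antidiagonal] at h1
    rw [Finset.Nat.mem_antidiagonalTuple] at h2 ⊢
    rw [Fin.sum_univ_succ]
    simp only [Fin.cons_zero, Fin.cons_succ]
    omega
  · intro d _
    exact Fin.cons_self_tail d
  · rintro ⟨⟨a, b⟩, d⟩ hq
    rw [Finset.mem_sigma] at hq
    obtain ⟨h1, h2⟩ := hq
    rw [Finset.HasAntidiagonal.mem_antidiagonal] at h1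
    rw [Finset.Nat.mem_antidiagonalTuple] at h2
    have h1' : a + b = k := h1
    simp only [Fin.cons_zero, Fin.cons_succ]
    have hb : k - a = b := by omega
    rw [hb]
  · intro d hd
    rw [Fin.prod_univ_succ]
    simp only [Fin.cons_zero, Fin.cons_succ]

/-- `hsym` indexed by a list of variables. -/
def hsymL (k : ℕ) (L : List ℂ) : ℂ := hsym L.length k L.get

lemma get_cons (z : ℂ) (L : List ℂ) : (z :: L).get = Fin.cons z L.get := by
  funext a
  refine Fin.cases ?_ (fun i => ?_) a <;> rfl

lemma hsymL_cons (k : ℕ) (z : ℂ) (L : List ℂ) :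
    hsymL k (z :: L) = ∑ p ∈ Finset.HasAntidiagonal.antidiagonal k, z ^ p.1 * hsymL p.2 L := by
  rw [hsymL, get_cons]
  exact hsym_cons L.length k z L.get

lemma hsymL_zero (L : List ℂ) : hsymL 0 L = 1 := hsym_zero _ _

lemma hsymL_nil (k : ℕ) : hsymL (k + 1) [] = 0 := hsym_zero_vars k _

lemma hsymL_rec (k : ℕ) (z : ℂ) (L : List ℂ) :
    hsymL (k + 1) (z :: L) = z * hsymL k (z :: L) + hsymL (k + 1) L := by
  rw [hsymL_cons, Finset.Nat.sum_antidiagonal_succ]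
  rw [hsymL_cons (k := k), Finset.mul_sum]
  simp [pow_succ, mul_comm, mul_assoc, mul_left_comm, add_comm]

lemma hsymL_single (k : ℕ) (u : ℂ) : hsymL k [u] = u ^ k := by
  induction k with
  | zero => simp [hsymL_zero]
  | succ k ih => rw [hsymL_rec, hsymL_nil, ih, pow_succ, mul_comm]; ring

lemma hsymL_star (c : ℕ) (u z : ℂ) (L : List ℂ) :
    hsymL c (u :: z :: L) * (u - z) = hsymL (c + 1) (u :: L) - hsymL (c + 1) (z :: L) := by
  induction c with
  | zero =>
    rw [hsymL_zero]
    rw [hsymL_rec 0 u L, hsymL_rec 0 z L, hsymL_zero, hsymL_zero]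
    ring
  | succ c ih =>
    have h1 : hsymL (c + 1) (u :: z :: L) = u * hsymL c (u :: z :: L) + hsymL (c + 1) (z :: L) :=
      hsymL_rec c u (z :: L)
    have h2 : hsymL (c + 2) (u :: L) = u * hsymL (c + 1) (u :: L) + hsymL (c + 2) L :=
      hsymL_rec (c + 1) u L
    have h3 : hsymL (c + 2) (z :: L) = z * hsymL (c + 1) (z :: L) + hsymL (c + 2) L :=
      hsymL_rec (c + 1) z L
    calc hsymL (c + 1) (u :: z :: L) * (u - z)
        = u * (hsymL c (u :: z :: L) * (u - z)) + hsymL (c + 1) (z :: L) * (u - z) := by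
          rw [h1]; ring
      _ = u * (hsymL (c + 1) (u :: L) - hsymL (c + 1) (z :: L)) +
            hsymL (c + 1) (z :: L) * (u - z) := by rw [ih]
      _ = u * hsymL (c + 1) (u :: L) - z * hsymL (c + 1) (z :: L) := by ring
      _ = hsymL (c + 1 + 1) (u :: L) - hsymL (c + 1 + 1) (z :: L) := by rw [h2, h3]; ring

/-- `hsym` with integer degree, zero for negative degree. -/
def Hz (d : ℤ) (L : List ℂ) : ℂ := if 0 ≤ d then hsymL d.toNat L else 0

lemma Hz_star (d : ℤ) (u z : ℂ) (L : List ℂ) :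
    Hz (d - 1) (u :: z :: L) * (u - z) = Hz d (u :: L) - Hz d (z :: L) := by
  unfold Hz
  rcases lt_trichotomy d 0 with h | rfl | h
  · rw [if_neg (by omega), if_neg (by omega), if_neg (by omega)]; ring
  · rw [if_neg (by omega), if_pos le_rfl, if_pos le_rfl]
    simp [hsymL_zero]
  · rw [if_pos (by omega), if_pos (by omega), if_pos (by omega)]
    have hd : d.toNat = (d - 1).toNat + 1 := by omega
    rw [hd]
    exact hsymL_star _ u z L

lemma newton (L : List ℂ) (u : ℂ) (k : ℕ) :
    (∑ p ∈ Finset.range L.length,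
        (((L.drop (p + 1)).map (fun w => u - w)).prod) *
          Hz ((k : ℤ) + p + 1 - L.length) (L.drop p))
      + Hz ((k : ℤ) - L.length) (u :: L) * ((L.map (fun w => u - w)).prod) = u ^ k := by
  induction L with
  | nil =>
    simp only [List.length_nil, Finset.range_zero, Finset.sum_empty, List.map_nil,
      List.prod_nil, mul_one, zero_add, Nat.cast_zero, sub_zero]
    rw [Hz, if_pos (Int.natCast_nonneg k)]
    rw [Int.toNat_natCast]
    exact hsymL_single k u
  | cons z L ih =>
    simp only [List.length_cons, Finset.sum_range_succ', List.drop_succ_cons, List.drop_zero,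
      List.map_cons, List.prod_cons]
    have hdeg : ∀ p : ℕ, ((k : ℤ) + (p + 1 : ℕ) + 1 - (L.length + 1 : ℕ)) =
        ((k : ℤ) + p + 1 - L.length) := by
      intro p; push_cast; ring
    have hdeg0 : ((k : ℤ) + (0 : ℕ) + 1 - (L.length + 1 : ℕ)) = (k : ℤ) - L.length := by
      push_cast; ring
    have hdeg1 : ((k : ℤ) - (L.length + 1 : ℕ)) = ((k : ℤ) - L.length) - 1 := by
      push_cast; ring
    rw [hdeg0, hdeg1]
    have hsum : ∑ p ∈ Finset.range L.length,
        (((L.drop (p + 1)).map (fun w => u - w)).prod) *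
          Hz ((k : ℤ) + (p + 1 : ℕ) + 1 - (L.length + 1 : ℕ)) (L.drop p) =
        ∑ p ∈ Finset.range L.length,
        (((L.drop (p + 1)).map (fun w => u - w)).prod) *
          Hz ((k : ℤ) + p + 1 - L.length) (L.drop p) := by
      refine Finset.sum_congr rfl fun p _ => ?_
      rw [hdeg p]
    rw [hsum]
    have hstar := Hz_star ((k : ℤ) - L.length) u z L
    linear_combination ih + (L.map (fun w => u - w)).prod * hstar

lemma hsymL_norm_le :
    ∀ (L : List ℂ), (∀ w ∈ L, ‖w‖ ≤ 1 / 8) → ∀ d : ℕ,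
      ‖hsymL d L‖ ≤ 2 ^ L.length * (1 / 4 : ℝ) ^ d := by
  intro L
  induction L with
  | nil =>
    intro _ d
    cases d with
    | zero => simp [hsymL_zero]
    | succ d => simp [hsymL_nil]
  | cons z L ih =>
    intro hL d
    have hz : ‖z‖ ≤ 1 / 8 := hL z List.mem_cons_self
    have hL' : ∀ w ∈ L, ‖w‖ ≤ 1 / 8 := fun w hw => hL w (List.mem_cons_of_mem z hw)
    induction d with
    | zero =>
      rw [hsymL_zero]
      simp only [norm_one, pow_zero, mul_one]
      have : (1 : ℝ) ≤ 2 ^ (L.length + 1) := one_le_pow₀ (by norm_num : (1:ℝ) ≤ 2)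
      simpa using this
    | succ d ihd =>
      rw [hsymL_rec]
      have h1 : ‖z * hsymL d (z :: L) + hsymL (d + 1) L‖ ≤
          ‖z‖ * ‖hsymL d (z :: L)‖ + ‖hsymL (d + 1) L‖ := by
        refine (norm_add_le _ _).trans ?_
        rw [norm_mul]
      refine h1.trans ?_
      have h2 := ihd
      have h3 := ih hL' (d + 1)
      have h4 : ‖hsymL d (z :: L)‖ ≤ 2 ^ (L.length + 1) * (1 / 4 : ℝ) ^ d := h2
      have h5 : (0 : ℝ) ≤ ‖hsymL d (z :: L)‖ := norm_nonneg _
      have h6 : (0 : ℝ) ≤ ‖z‖ := norm_nonneg _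
      have h7 : (0 : ℝ) < (1 / 4 : ℝ) ^ d := by positivity
      have h8 : (0 : ℝ) < 2 ^ L.length := by positivity
      calc ‖z‖ * ‖hsymL d (z :: L)‖ + ‖hsymL (d + 1) L‖
          ≤ (1 / 8) * (2 ^ (L.length + 1) * (1 / 4 : ℝ) ^ d) +
            2 ^ L.length * (1 / 4 : ℝ) ^ (d + 1) := by
            gcongr
        _ = 2 ^ (L.length + 1) * (1 / 4 : ℝ) ^ (d + 1) := by ring

lemma prod_map_eq (M : List ℂ) (g : ℂ → ℂ) :
    (M.map g).prod = ∏ a : Fin M.length, g (M.get a) := by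
  induction M with
  | nil => simp
  | cons z M ih =>
    rw [List.map_cons, List.prod_cons, ih]
    show g z * ∏ a : Fin M.length, g (M.get a) =
      ∏ a : Fin (M.length + 1), g ((z :: M).get a)
    rw [Fin.prod_univ_succ]
    rw [get_cons]
    simp

/-- The key finite "Newton interpolation" identity in the form needed for the matrix. -/
lemma newton_fin (n : ℕ) (x : Fin n → ℂ) (i : Fin n) (k : ℕ) :
    ∑ l ∈ Finset.Ici i, (∏ s ∈ Finset.Ioi l, (x i - x s)) *
      (if n ≤ k + (l : ℕ) + 1 then
        hsym (n - (l : ℕ)) (k + (l : ℕ) + 1 - n)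
          (fun a : Fin (n - (l : ℕ)) => x ⟨(l : ℕ) + (a : ℕ), by
            have h1 := a.isLt; have h2 := l.isLt; omega⟩)
      else 0) = x i ^ k := by
  have hin : (i : ℕ) < n := i.isLt
  set f : Fin (n - (i : ℕ)) → ℂ := fun a => x ⟨(i : ℕ) + (a : ℕ), by
    have h1 := a.isLt; omega⟩ with hf
  set L : List ℂ := List.ofFn f with hLdef
  have hlen : L.length = n - (i : ℕ) := List.length_ofFn (f := f)
  have hget : ∀ (a : Fin L.length), L.get a = x ⟨(i : ℕ) + (a : ℕ), by
      have h := a.isLt; omega⟩ := by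
    intro a
    exact List.get_ofFn f a
  have hvanish : ((L.map (fun w => x i - w)).prod) = 0 := by
    apply List.prod_eq_zero
    rw [List.mem_map]
    refine ⟨x i, ?_, by ring⟩
    have h0 : (0 : ℕ) < L.length := by omega
    have heq : L.get ⟨0, h0⟩ = x i := by
      rw [hget]
      exact congrArg x (by ext; simp)
    rw [← heq]
    exact List.get_mem L ⟨0, h0⟩
  have hnew := newton L (x i) k
  rw [hvanish, mul_zero, add_zero] at hnew
  rw [← hnew, hlen]
  refine Finset.sum_bij' (i := fun (l : Fin n) (hl : l ∈ Finset.Ici i) => (l : ℕ) - (i : ℕ))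
    (j := fun (p : ℕ) (hp : p ∈ Finset.range (n - (i : ℕ))) =>
      (⟨(i : ℕ) + p, by rw [Finset.mem_range] at hp; omega⟩ : Fin n)) ?_ ?_ ?_ ?_ ?_
  · intro l hl
    rw [Finset.mem_Ici] at hl
    rw [Finset.mem_range]
    have h1 := l.isLt
    have h2 : (i : ℕ) ≤ (l : ℕ) := hl
    beta_reduce
    omega
  · intro p hp
    rw [Finset.mem_Ici]
    rw [Finset.mem_range] at hp
    beta_reduce
    rw [Fin.le_def]
    simp
  · intro l hl
    rw [Finset.mem_Ici] at hl
    have h2 : (i : ℕ) ≤ (l : ℕ) := hl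
    beta_reduce
    ext
    simp
    omega
  · intro p hp
    rw [Finset.mem_range] at hp
    beta_reduce
    simp
  · intro l hl
    rw [Finset.mem_Ici] at hl
    have hil : (i : ℕ) ≤ (l : ℕ) := hl
    have hln := l.isLt
    beta_reduce
    -- two factors
    congr 1
    · -- products
      rw [prod_map_eq]
      refine Finset.prod_bij' (i := fun (s : Fin n) (hs : s ∈ Finset.Ioi l) =>
        (⟨(s : ℕ) - ((l : ℕ) + 1), by
          rw [Finset.mem_Ioi, Fin.lt_def] at hs
          rw [List.length_drop, hlen]
          have := s.isLt
          omega⟩ : Fin ((L.drop ((l : ℕ) - (i : ℕ) + 1)).length)))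
        (j := fun q _ => (⟨(l : ℕ) + 1 + (q : ℕ), by
          have hq := q.isLt
          have h2 : (L.drop ((l : ℕ) - (i : ℕ) + 1)).length = L.length - ((l : ℕ) - (i : ℕ) + 1) :=
            List.length_drop
          omega⟩ : Fin n)) ?_ ?_ ?_ ?_ ?_
      · intro s hs
        exact Finset.mem_univ _
      · intro q _
        beta_reduce
        rw [Finset.mem_Ioi, Fin.lt_def]
        simp
        omega
      · intro s hs
        rw [Finset.mem_Ioi, Fin.lt_def] at hs
        beta_reduce
        ext
        simp
        omega
      · intro q _
        beta_reduce
        ext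
        simp
      · intro s hs
        rw [Finset.mem_Ioi, Fin.lt_def] at hs
        have hs' : (l : ℕ) < (s : ℕ) := hs
        have hsn := s.isLt
        beta_reduce
        congr 1
        have hidx : ((l : ℕ) - (i : ℕ) + 1) + ((s : ℕ) - ((l : ℕ) + 1)) < L.length := by
          rw [hlen]; omega
        have hgd : L.get ⟨((l : ℕ) - (i : ℕ) + 1) + ((s : ℕ) - ((l : ℕ) + 1)), hidx⟩ =
            (L.drop ((l : ℕ) - (i : ℕ) + 1)).get ⟨(s : ℕ) - ((l : ℕ) + 1), by simp; omega⟩ := by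
          simp
        rw [← hgd, hget]
        congr 1
        ext
        simp
        omega
    · -- H term vs if-hsym term
      have hlen' : (L.drop ((l : ℕ) - (i : ℕ))).length = n - (l : ℕ) := by
        rw [List.length_drop, hlen]; omega
      rw [Hz]
      by_cases hc : n ≤ k + (l : ℕ) + 1
      · rw [if_pos hc, if_pos (by omega)]
        rw [hsymL]
        have hdeg : ((k : ℤ) + (((l : ℕ) - (i : ℕ) : ℕ) : ℤ) + 1 - ((n - (i : ℕ) : ℕ) : ℤ)).toNat
            = k + (l : ℕ) + 1 - n := by omega
        rw [hdeg]
        refine hsym_congr (by omega) _ _ ?_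
        intro a
        have ha := a.isLt
        have hdl : (L.drop ((l : ℕ) - (i : ℕ))).length = L.length - ((l : ℕ) - (i : ℕ)) :=
          List.length_drop
        have hidx : ((l : ℕ) - (i : ℕ)) + (a : ℕ) < L.length := by omega
        have hgd : L.get ⟨(l : ℕ) - (i : ℕ) + (a : ℕ), hidx⟩ =
            (L.drop ((l : ℕ) - (i : ℕ))).get ⟨(a : ℕ), by simp; omega⟩ := by
          simp
        have h1 : (L.drop ((l : ℕ) - (i : ℕ))).get a =
            L.get ⟨(l : ℕ) - (i : ℕ) + (a : ℕ), hidx⟩ := hgd.symm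
        rw [h1, hget]
        congr 1
        ext
        simp
        omega
      · rw [if_neg hc, if_neg (by omega)]

lemma hsym_norm_le (r d : ℕ) (z : Fin r → ℂ) (hz : ∀ a, ‖z a‖ ≤ 1 / 8) :
    ‖hsym r d z‖ ≤ 2 ^ r * (1 / 4 : ℝ) ^ d := by
  have h1 : hsym r d z = hsymL d (List.ofFn z) := by
    rw [hsymL]
    refine hsym_congr (List.length_ofFn (f := z)) z _ ?_
    intro a
    exact List.get_ofFn z a
  rw [h1]
  have h2 := hsymL_norm_le (List.ofFn z) ?_ d
  · rwa [List.length_ofFn] at h2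
  · intro w hw
    rw [List.mem_ofFn] at hw
    obtain ⟨a, rfl⟩ := hw
    exact hz a

lemma quarter_pow_le (n d k : ℕ) (hk : k ≤ n + d) :
    (1 / 4 : ℝ) ^ d ≤ 4 ^ n * (1 / 4) ^ k := by
  have h4 : (4 : ℝ) ^ k ≤ 4 ^ (n + d) := pow_le_pow_right₀ (by norm_num) hk
  have key : (1 / 4 : ℝ) ^ d * 4 ^ k ≤ 4 ^ n := by
    calc (1 / 4 : ℝ) ^ d * 4 ^ k ≤ (1 / 4) ^ d * 4 ^ (n + d) :=
          mul_le_mul_of_nonneg_left h4 (by positivity)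
      _ = 4 ^ n * ((1 / 4 : ℝ) * 4) ^ d := by rw [pow_add, mul_pow]; ring
      _ = 4 ^ n := by norm_num
  have e3 : (4 : ℝ) ^ k * (1 / 4) ^ k = 1 := by rw [← mul_pow]; norm_num
  calc (1 / 4 : ℝ) ^ d = ((1 / 4) ^ d * 4 ^ k) * (1 / 4) ^ k := by
        rw [mul_assoc, e3, mul_one]
    _ ≤ 4 ^ n * (1 / 4) ^ k := mul_le_mul_of_nonneg_right key (by positivity)

lemma summable_entry (n : ℕ) (x : Fin n → ℂ) (yj t : ℂ)
    (hx : ∀ i, ‖x i‖ < 1 / 8) (hy : ‖yj‖ < 1 / 8) (ht : ‖t‖ < 1) (l : Fin n) :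
    Summable (fun k : ℕ =>
      if n ≤ k + (l : ℕ) + 1 then
        (1 - t ^ (k + 1)) *
          hsym (n - (l : ℕ)) (k + (l : ℕ) + 1 - n)
            (fun a : Fin (n - (l : ℕ)) => x ⟨(l : ℕ) + (a : ℕ), by
              have h1 := a.isLt; have h2 := l.isLt; omega⟩) * yj ^ k
      else 0) := by
  have hgeom : Summable (fun k : ℕ => ((2 : ℝ) * 2 ^ n * 4 ^ n) * (1 / 32) ^ k) :=
    (summable_geometric_of_lt_one (by norm_num) (by norm_num)).mul_left _
  refine Summable.of_norm_bounded hgeom ?_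
  intro k
  by_cases hc : n ≤ k + (l : ℕ) + 1
  · rw [if_pos hc]
    have hb1 : ‖(1 : ℂ) - t ^ (k + 1)‖ ≤ 2 := by
      refine (norm_sub_le _ _).trans ?_
      rw [norm_one, norm_pow]
      have : ‖t‖ ^ (k + 1) ≤ 1 := pow_le_one₀ (norm_nonneg t) ht.le
      linarith
    have hb2 : ‖hsym (n - (l : ℕ)) (k + (l : ℕ) + 1 - n)
        (fun a : Fin (n - (l : ℕ)) => x ⟨(l : ℕ) + (a : ℕ), by
          have h1 := a.isLt; have h2 := l.isLt; omega⟩)‖ ≤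
        2 ^ n * (4 ^ n * (1 / 4 : ℝ) ^ k) := by
      refine (hsym_norm_le _ _ _ (fun a => (hx _).le)).trans ?_
      have hle1 : (2 : ℝ) ^ (n - (l : ℕ)) ≤ 2 ^ n :=
        pow_le_pow_right₀ (by norm_num) (Nat.sub_le n _)
      have hle2 : (1 / 4 : ℝ) ^ (k + (l : ℕ) + 1 - n) ≤ 4 ^ n * (1 / 4) ^ k :=
        quarter_pow_le n _ k (by omega)
      exact mul_le_mul hle1 hle2 (by positivity) (by positivity)
    have hb3 : ‖yj ^ k‖ ≤ (1 / 8 : ℝ) ^ k := by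
      rw [norm_pow]
      exact pow_le_pow_left₀ (norm_nonneg _) hy.le k
    rw [norm_mul, norm_mul]
    refine (mul_le_mul (mul_le_mul hb1 hb2 (norm_nonneg _) (by norm_num)) hb3
      (norm_nonneg _) (by positivity)).trans (le_of_eq ?_)
    rw [show (1 / 32 : ℝ) = (1 / 4) * (1 / 8) by norm_num, mul_pow]
    ring
  · rw [if_neg hc]
    simp only [norm_zero]
    positivity

lemma summable_geom_fac (u tt : ℂ) (hu : ‖u‖ < 1) (htu : ‖tt * u‖ < 1) :
    Summable (fun k : ℕ => (1 - tt ^ (k + 1)) * u ^ k) := by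
  have h1 : Summable (fun k : ℕ => u ^ k) := summable_geometric_of_norm_lt_one hu
  have h2 : Summable (fun k : ℕ => (tt * u) ^ k) := summable_geometric_of_norm_lt_one htu
  have he : (fun k : ℕ => (1 - tt ^ (k + 1)) * u ^ k) =
      fun k => u ^ k - tt * (tt * u) ^ k := by
    funext k
    rw [mul_pow]
    ring
  rw [he]
  exact h1.sub (h2.mul_left tt)

lemma tsum_geom_fac (u tt : ℂ) (hu : ‖u‖ < 1) (htu : ‖tt * u‖ < 1) :
    ∑' k : ℕ, (1 - tt ^ (k + 1)) * u ^ k = (1 - tt) / ((1 - u) * (1 - tt * u)) := by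
  have h1 : Summable (fun k : ℕ => u ^ k) := summable_geometric_of_norm_lt_one hu
  have h2 : Summable (fun k : ℕ => (tt * u) ^ k) := summable_geometric_of_norm_lt_one htu
  have he : (fun k : ℕ => (1 - tt ^ (k + 1)) * u ^ k) =
      fun k => u ^ k - tt * (tt * u) ^ k := by
    funext k
    rw [mul_pow]
    ring
  rw [he, Summable.tsum_sub h1 (h2.mul_left tt), tsum_mul_left,
    tsum_geometric_of_norm_lt_one hu, tsum_geometric_of_norm_lt_one htu]
  have hu1 : (1 : ℂ) - u ≠ 0 := by
    intro h
    rw [sub_eq_zero] at h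
    rw [← h] at hu
    simp at hu
  have hu2 : (1 : ℂ) - tt * u ≠ 0 := by
    intro h
    rw [sub_eq_zero] at h
    rw [← h] at htu
    simp at htu
  have hu3 : (1 : ℂ) - u * tt ≠ 0 := by rw [mul_comm]; exact hu2
  field_simp
  ring

def Umat (m n : ℕ) (x : Fin n → ℂ) : Matrix (Fin n) (Fin n) ℂ := fun i l =>
  if (i : ℕ) < m then (if l = i then (1 : ℂ) else 0)
  else (if i ≤ l then ∏ s ∈ Finset.Ioi l, (x i - x s) else 0)

lemma Umat_triangular (m n : ℕ) (x : Fin n → ℂ) : (Umat m n x).BlockTriangular id := by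
  intro i l h
  have hli : l < i := h
  simp only [Umat]
  by_cases him : (i : ℕ) < m
  · rw [if_pos him, if_neg (by intro e; rw [e] at hli; exact lt_irrefl _ hli)]
  · rw [if_neg him, if_neg (by intro e; exact absurd (lt_of_lt_of_le hli e) (lt_irrefl l))]

lemma det_Umat (m n : ℕ) (x : Fin n → ℂ) :
    (Umat m n x).det =
      ∏ i : Fin n, ∏ j ∈ Finset.Ioi i, if m ≤ (i : ℕ) then x i - x j else 1 := by
  rw [Matrix.det_of_upperTriangular (Umat_triangular m n x)]
  refine Finset.prod_congr rfl fun i _ => ?_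
  simp only [Umat]
  by_cases him : (i : ℕ) < m
  · rw [if_pos him]
    have h2 : ∏ j ∈ Finset.Ioi i, (if m ≤ (i : ℕ) then x i - x j else 1) = 1 := by
      rw [Finset.prod_congr rfl (fun j _ => if_neg (by omega)), Finset.prod_const_one]
    rw [h2]
    simp
  · rw [if_neg him, if_pos le_rfl]
    exact (Finset.prod_congr rfl fun j _ => (if_pos (by omega)).symm)

/-- Row-operation form of the Izergin determinant (equation (17) of the paper): for
`0 ≤ m < n`,
`det[(1-t)/((1-xᵢyⱼ)(1-t xᵢyⱼ))] = ∏_{m+1≤i<j≤n} (xᵢ-xⱼ) · det[𝒜_{ij}]`,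
where `𝒜_{ij} = (1-t)/((1-xᵢyⱼ)(1-t xᵢyⱼ))` for `i ≤ m` and
`𝒜_{ij} = Σ_{k≥0} (1-t^{k+1}) h_{k+i-n}(xᵢ,…,xₙ) yⱼᵏ` for `i > m`
(with `h_d = 0` for `d < 0`).  It is stated here for complex values of the variables in a
domain of convergence. -/
theorem det_row_operations (m n : ℕ) (hmn : m < n) (x y : Fin n → ℂ) (t : ℂ)
    (hx : ∀ i, ‖x i‖ < 1 / 8) (hy : ∀ j, ‖y j‖ < 1 / 8) (ht : ‖t‖ < 1) :
    (Matrix.of fun i j : Fin n =>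
        (1 - t) / ((1 - x i * y j) * (1 - t * (x i * y j)))).det =
      (∏ i : Fin n, ∏ j ∈ Finset.Ioi i, if m ≤ (i : ℕ) then x i - x j else 1) *
        (Matrix.of fun i j : Fin n =>
          if (i : ℕ) < m then
            (1 - t) / ((1 - x i * y j) * (1 - t * (x i * y j)))
          else
            ∑' k : ℕ,
              if n ≤ k + (i : ℕ) + 1 then
                (1 - t ^ (k + 1)) *
                  hsym (n - (i : ℕ)) (k + (i : ℕ) + 1 - n)
                    (fun a : Fin (n - (i : ℕ)) =>
                      x ⟨(i : ℕ) + (a : ℕ), by have h1 := a.isLt; have h2 := i.isLt; omega⟩) *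
                  y j ^ k
              else 0).det := by
  classical
  set A : Matrix (Fin n) (Fin n) ℂ := Matrix.of fun i j : Fin n =>
    if (i : ℕ) < m then
      (1 - t) / ((1 - x i * y j) * (1 - t * (x i * y j)))
    else
      ∑' k : ℕ,
        if n ≤ k + (i : ℕ) + 1 then
          (1 - t ^ (k + 1)) *
            hsym (n - (i : ℕ)) (k + (i : ℕ) + 1 - n)
              (fun a : Fin (n - (i : ℕ)) =>
                x ⟨(i : ℕ) + (a : ℕ), by have h1 := a.isLt; have h2 := i.isLt; omega⟩) *
            y j ^ k
        else 0 with hA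
  have hnorm : ∀ i j : Fin n, ‖x i * y j‖ < 1 := by
    intro i j
    rw [norm_mul]
    have h1 := mul_lt_mul'' (hx i) (hy j) (norm_nonneg _) (norm_nonneg _)
    nlinarith [norm_nonneg (x i), norm_nonneg (y j)]
  have hnormt : ∀ i j : Fin n, ‖t * (x i * y j)‖ < 1 := by
    intro i j
    rw [norm_mul]
    calc ‖t‖ * ‖x i * y j‖ ≤ 1 * ‖x i * y j‖ :=
          mul_le_mul_of_nonneg_right ht.le (norm_nonneg _)
      _ = ‖x i * y j‖ := one_mul _
      _ < 1 := hnorm i j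
  have hM : (Matrix.of fun i j : Fin n =>
      (1 - t) / ((1 - x i * y j) * (1 - t * (x i * y j)))) = Umat m n x * A := by
    ext i j
    rw [Matrix.mul_apply, Matrix.of_apply]
    by_cases him : (i : ℕ) < m
    · rw [Finset.sum_eq_single i]
      · simp only [Umat, hA, Matrix.of_apply]
        rw [if_pos him, if_pos him]
        simp
      · intro l _ hne
        simp only [Umat]
        rw [if_pos him, if_neg hne, zero_mul]
      · intro h
        exact absurd (Finset.mem_univ i) h
    · -- m ≤ i
      symm
      have hstep1 : ∀ l : Fin n, Umat m n x i l * A l j =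
          if i ≤ l then (∏ s ∈ Finset.Ioi l, (x i - x s)) * A l j else 0 := by
        intro l
        simp only [Umat]
        rw [if_neg him]
        by_cases hil : i ≤ l
        · rw [if_pos hil, if_pos hil]
        · rw [if_neg hil, if_neg hil, zero_mul]
      rw [Finset.sum_congr rfl fun l _ => hstep1 l]
      rw [← Finset.sum_filter]
      have hIci : Finset.filter (fun l => i ≤ l) Finset.univ = Finset.Ici i := by
        ext l
        simp [Finset.mem_Ici]
      rw [hIci]
      have hAl : ∀ l ∈ Finset.Ici i, (∏ s ∈ Finset.Ioi l, (x i - x s)) * A l j =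
          ∑' k : ℕ, (∏ s ∈ Finset.Ioi l, (x i - x s)) *
            (if n ≤ k + (l : ℕ) + 1 then
              (1 - t ^ (k + 1)) *
                hsym (n - (l : ℕ)) (k + (l : ℕ) + 1 - n)
                  (fun a : Fin (n - (l : ℕ)) =>
                    x ⟨(l : ℕ) + (a : ℕ), by have h1 := a.isLt; have h2 := l.isLt; omega⟩) *
                y j ^ k
            else 0) := by
        intro l hl
        rw [Finset.mem_Ici] at hl
        have hlm : ¬ ((l : ℕ) < m) := by
          have : (i : ℕ) ≤ (l : ℕ) := hl
          omega
        rw [hA, Matrix.of_apply, if_neg hlm, ← tsum_mul_left]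
      rw [Finset.sum_congr rfl hAl]
      have hsummable : ∀ l ∈ Finset.Ici i, Summable (fun k : ℕ =>
          (∏ s ∈ Finset.Ioi l, (x i - x s)) *
            (if n ≤ k + (l : ℕ) + 1 then
              (1 - t ^ (k + 1)) *
                hsym (n - (l : ℕ)) (k + (l : ℕ) + 1 - n)
                  (fun a : Fin (n - (l : ℕ)) =>
                    x ⟨(l : ℕ) + (a : ℕ), by have h1 := a.isLt; have h2 := l.isLt; omega⟩) *
                y j ^ k
            else 0)) := by
        intro l _
        exact (summable_entry n x (y j) t hx (hy j) ht l).mul_left _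
      rw [← Summable.tsum_finsetSum hsummable]
      have hk : ∀ k : ℕ, (∑ l ∈ Finset.Ici i, (∏ s ∈ Finset.Ioi l, (x i - x s)) *
            (if n ≤ k + (l : ℕ) + 1 then
              (1 - t ^ (k + 1)) *
                hsym (n - (l : ℕ)) (k + (l : ℕ) + 1 - n)
                  (fun a : Fin (n - (l : ℕ)) =>
                    x ⟨(l : ℕ) + (a : ℕ), by have h1 := a.isLt; have h2 := l.isLt; omega⟩) *
                y j ^ k
            else 0)) = (1 - t ^ (k + 1)) * (x i * y j) ^ k := by
        intro k
        have hterm : ∀ l ∈ Finset.Ici i, (∏ s ∈ Finset.Ioi l, (x i - x s)) *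
            (if n ≤ k + (l : ℕ) + 1 then
              (1 - t ^ (k + 1)) *
                hsym (n - (l : ℕ)) (k + (l : ℕ) + 1 - n)
                  (fun a : Fin (n - (l : ℕ)) =>
                    x ⟨(l : ℕ) + (a : ℕ), by have h1 := a.isLt; have h2 := l.isLt; omega⟩) *
                y j ^ k
            else 0) = ((1 - t ^ (k + 1)) * y j ^ k) *
              ((∏ s ∈ Finset.Ioi l, (x i - x s)) *
                (if n ≤ k + (l : ℕ) + 1 then
                  hsym (n - (l : ℕ)) (k + (l : ℕ) + 1 - n)
                    (fun a : Fin (n - (l : ℕ)) =>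
                      x ⟨(l : ℕ) + (a : ℕ), by have h1 := a.isLt; have h2 := l.isLt; omega⟩)
                else 0)) := by
          intro l _
          by_cases hcond : n ≤ k + (l : ℕ) + 1
          · rw [if_pos hcond, if_pos hcond]; ring
          · rw [if_neg hcond, if_neg hcond]
            simp
        rw [Finset.sum_congr rfl hterm, ← Finset.mul_sum, newton_fin n x i k]
        rw [mul_pow]
        ring
      rw [tsum_congr hk, tsum_geom_fac (x i * y j) t (hnorm i j) (hnormt i j)]
  rw [hM, Matrix.det_mul, det_Umat]
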